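/- Let ρ^ε, ρ be probability densities on T^d, u, ψ Lipschitz bounded functions (u : T^d → ℝ^d, ψ : T^d → ℝ), and u^ε measurable with ρ^ε|u^ε|² integrable. Then the cross term K₃ := ∫∫ ψ(x−y) ρ^ε(x)(ρ^ε(y)−ρ(y))(u(y)−u(x))·(u^ε(x)−u(x)) dx dy satisfies K₃ ≤ C (W₂²(ρ^ε, ρ) + ∫ ρ^ε(x)|u^ε(x)−u(x)|² dx), where C depends only on the Lipschitz norms and sup norms of ψ and u. -/

import Mathlib

open MeasureTheory
open scoped RealInnerProductSpace
open scoped NNReal ENNReal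

instance : Fact ((0:ℝ) < 1) := ⟨one_pos⟩

/-- The flat torus `T^d`. -/
abbrev Td (d : ℕ) := Fin d → AddCircle (1:ℝ)

/-- The velocity space `ℝ^d`. -/
abbrev Vd (d : ℕ) := EuclideanSpace ℝ (Fin d)

/-- The Euclidean (quotient) distance on the flat torus. -/
noncomputable def torusDist {d : ℕ} (x y : Td d) : ℝ :=
  Real.sqrt (∑ i, (dist (x i) (y i))^2)

/-- Squared 2-Wasserstein distance on the torus. -/
noncomputable def W2sq {d : ℕ} (μ ν : Measure (Td d)) : ℝ :=
  sInf {r : ℝ | ∃ π : Measure (Td d × Td d),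
    π.map Prod.fst = μ ∧ π.map Prod.snd = ν ∧
    r = ∫ p, (torusDist p.1 p.2)^2 ∂π}

lemma torusDist_nonneg {d : ℕ} (x y : Td d) : 0 ≤ torusDist x y := Real.sqrt_nonneg _

lemma dist_le_torusDist {d : ℕ} (x y : Td d) : dist x y ≤ torusDist x y := by
  refine (dist_pi_le_iff (torusDist_nonneg x y)).2 fun i => ?_
  have h : dist (x i) (y i) = Real.sqrt ((dist (x i) (y i))^2) :=
    (Real.sqrt_sq dist_nonneg).symm
  rw [h]
  exact Real.sqrt_le_sqrt (Finset.single_le_sum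
    (f := fun j => dist (x j) (y j)^2) (fun j _ => sq_nonneg _) (Finset.mem_univ i))

lemma torusDist_continuous {d : ℕ} : Continuous fun p : Td d × Td d => torusDist p.1 p.2 := by
  apply Real.continuous_sqrt.comp
  exact continuous_finset_sum _ fun i _ =>
    (((continuous_apply i).comp continuous_fst).dist
      ((continuous_apply i).comp continuous_snd)).pow 2

/-- second moment bound: `(∫ f)² ≤ ∫ f²` for a probability measure. -/
lemma sq_integral_le_integral_sq {α : Type*} [MeasurableSpace α] {μ : Measure α}
    [IsProbabilityMeasure μ] {f : α → ℝ} (hf : Integrable f μ)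
    (hf2 : Integrable (fun x => f x ^ 2) μ) :
    (∫ x, f x ∂μ) ^ 2 ≤ ∫ x, f x ^ 2 ∂μ := by
  set m := ∫ x, f x ∂μ with hm
  have key : ∫ x, (f x - m)^2 ∂μ = (∫ x, f x ^ 2 ∂μ) - m^2 := by
    have h1 : Integrable (fun x => f x ^ 2 - (2*m) * f x) μ := hf2.sub (hf.const_mul _)
    have heq : (fun x => (f x - m)^2) = fun x => (f x ^ 2 - (2*m) * f x) + m^2 := by
      funext x; ring
    rw [heq, integral_add h1 (integrable_const _), integral_sub hf2 (hf.const_mul _),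
      integral_const, integral_const_mul]
    simp [← hm]
    ring
  have h0 : 0 ≤ ∫ x, (f x - m)^2 ∂μ := integral_nonneg fun x => sq_nonneg _
  linarith

/-- Key Lipschitz estimate. -/
lemma key_lip {d : ℕ} (ψ : Td d → ℝ) (u : Td d → Vd d) (Lψ Lu : NNReal)
    (hψ : LipschitzWith Lψ ψ) (hu : LipschitzWith Lu u)
    (Cψ Cu : ℝ) (hCψ0 : 0 ≤ Cψ) (hCu0 : 0 ≤ Cu)
    (hCψ : ∀ z, |ψ z| ≤ Cψ) (hCu : ∀ z, ‖u z‖ ≤ Cu)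
    (x y y' : Td d) (v : Vd d) :
    ψ (x - y) * ⟪u y - u x, v⟫ - ψ (x - y') * ⟪u y' - u x, v⟫
      ≤ (2*(Lψ:ℝ)*Cu + Cψ*(Lu:ℝ)) * ‖v‖ * torusDist y y' := by
  set T := torusDist y y' with hT
  have hT0 : 0 ≤ T := torusDist_nonneg _ _
  have hdyy : dist y y' ≤ T := dist_le_torusDist _ _
  have h1 : |ψ (x-y) - ψ (x-y')| ≤ (Lψ:ℝ) * T := by
    have := hψ.dist_le_mul (x - y) (x - y')
    rw [Real.dist_eq] at this
    have h2 : dist (x - y) (x - y') = dist y y' := dist_sub_left x y y'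
    calc |ψ (x-y) - ψ (x-y')| ≤ (Lψ:ℝ) * dist (x-y) (x-y') := this
      _ = (Lψ:ℝ) * dist y y' := by rw [h2]
      _ ≤ (Lψ:ℝ) * T := by nlinarith [Lψ.coe_nonneg]
  have h2 : |⟪u y - u x, v⟫| ≤ (2*Cu) * ‖v‖ := by
    calc |⟪u y - u x, v⟫| ≤ ‖u y - u x‖ * ‖v‖ := abs_real_inner_le_norm _ _
      _ ≤ (2*Cu) * ‖v‖ := by
          have := norm_sub_le (u y) (u x)
          have h := hCu y; have h' := hCu x
          nlinarith [norm_nonneg v]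
  have h3 : |⟪u y - u y', v⟫| ≤ (Lu:ℝ) * T * ‖v‖ := by
    calc |⟪u y - u y', v⟫| ≤ ‖u y - u y'‖ * ‖v‖ := abs_real_inner_le_norm _ _
      _ ≤ (Lu:ℝ) * T * ‖v‖ := by
          have h := hu.dist_le_mul y y'
          rw [dist_eq_norm] at h
          have h' : ‖u y - u y'‖ ≤ (Lu:ℝ) * T := by nlinarith [Lu.coe_nonneg]
          nlinarith [norm_nonneg v, norm_nonneg (u y - u y')]
  have hψb := hCψ (x - y')
  have hsplit : ψ (x - y) * ⟪u y - u x, v⟫ - ψ (x - y') * ⟪u y' - u x, v⟫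
      = (ψ (x-y) - ψ (x-y')) * ⟪u y - u x, v⟫ + ψ (x-y') * ⟪u y - u y', v⟫ := by
    have h' : ⟪u y - u x, v⟫ - ⟪u y' - u x, v⟫ = ⟪u y - u y', v⟫ := by
      rw [← inner_sub_left]; congr 1; abel
    linear_combination (ψ (x - y')) * h'
  calc ψ (x - y) * ⟪u y - u x, v⟫ - ψ (x - y') * ⟪u y' - u x, v⟫
      = (ψ (x-y) - ψ (x-y')) * ⟪u y - u x, v⟫ + ψ (x-y') * ⟪u y - u y', v⟫ := hsplit
    _ ≤ |(ψ (x-y) - ψ (x-y'))| * |⟪u y - u x, v⟫| + |ψ (x-y')| * |⟪u y - u y', v⟫| := by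
        refine add_le_add ?_ ?_
        · exact (le_abs_self _).trans (le_of_eq (abs_mul _ _))
        · exact (le_abs_self _).trans (le_of_eq (abs_mul _ _))
    _ ≤ ((Lψ:ℝ) * T) * ((2*Cu) * ‖v‖) + Cψ * ((Lu:ℝ) * T * ‖v‖) := by
        refine add_le_add
          (mul_le_mul h1 h2 (abs_nonneg _) (mul_nonneg Lψ.coe_nonneg hT0))
          (mul_le_mul hψb h3 (abs_nonneg _) hCψ0)
    _ = (2*(Lψ:ℝ)*Cu + Cψ*(Lu:ℝ)) * ‖v‖ * T := by ring

theorem cross_term_bound {d : ℕ} (ψ : Td d → ℝ) (u : Td d → Vd d) (Lψ Lu : NNReal)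
    (hψ : LipschitzWith Lψ ψ) (hu : LipschitzWith Lu u) :
    ∃ C > 0, ∀ (ρε ρ : Td d → ℝ) (uε : Td d → Vd d),
      Measurable ρε → Measurable ρ → Measurable uε →
      (∀ x, 0 ≤ ρε x) → (∀ x, 0 ≤ ρ x) →
      Integrable ρε → Integrable ρ →
      (∫ x, ρε x) = 1 → (∫ x, ρ x) = 1 →
      Integrable (fun x => ρε x * ‖uε x‖^2) →
      Integrable (fun q : Td d × Td d =>
        ψ (q.1 - q.2) * ρε q.1 * (ρε q.2 - ρ q.2) * ⟪u q.2 - u q.1, uε q.1 - u q.1⟫) →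
      (∫ q : Td d × Td d,
          ψ (q.1 - q.2) * ρε q.1 * (ρε q.2 - ρ q.2) * ⟪u q.2 - u q.1, uε q.1 - u q.1⟫)
        ≤ C * (W2sq (volume.withDensity fun x => ENNReal.ofReal (ρε x))
                    (volume.withDensity fun x => ENNReal.ofReal (ρ x))
               + ∫ x, ρε x * ‖uε x - u x‖^2) := by
  obtain ⟨Cψ, hCψ⟩ : ∃ C, ∀ z, |ψ z| ≤ C := by
    obtain ⟨C, hC⟩ := (isCompact_univ (X := Td d)).exists_bound_of_continuousOn
      hψ.continuous.continuousOn
    exact ⟨C, fun z => by simpa [Real.norm_eq_abs] using hC z (Set.mem_univ z)⟩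
  obtain ⟨Cu, hCu⟩ : ∃ C, ∀ z, ‖u z‖ ≤ C := by
    obtain ⟨C, hC⟩ := (isCompact_univ (X := Td d)).exists_bound_of_continuousOn
      hu.continuous.continuousOn
    exact ⟨C, fun z => hC z (Set.mem_univ z)⟩
  have hCψ0 : 0 ≤ Cψ := le_trans (abs_nonneg _) (hCψ 0)
  have hCu0 : 0 ≤ Cu := le_trans (norm_nonneg _) (hCu 0)
  set L : ℝ := 2*(Lψ:ℝ)*Cu + Cψ*(Lu:ℝ) with hL
  have hL0 : 0 ≤ L := by rw [hL]; positivity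
  clear_value L
  refine ⟨L/2 + 1, by positivity, ?_⟩
  intro ρε ρ uε hρε hρ huε hρε0 hρ0 hρεi hρi hρε1 hρ1 hi2 hiF
  set C : ℝ := L/2 + 1 with hCdef
  have hCpos : 0 < C := by rw [hCdef]; positivity
  clear_value C
  have hwm : Measurable fun x => uε x - u x := huε.sub hu.continuous.measurable
  set E : ℝ := ∫ x, ρε x * ‖uε x - u x‖^2 with hE
  clear_value E
  have hE0 : 0 ≤ E := by
    rw [hE]; exact integral_nonneg fun x => mul_nonneg (hρε0 x) (sq_nonneg _)
  -- integrability facts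
  have hw2 : Integrable (fun x => ρε x * ‖uε x - u x‖^2) := by
    have hmeas : Measurable fun x => ρε x * ‖uε x - u x‖^2 := hρε.mul (hwm.norm.pow_const 2)
    have hg : Integrable (fun x => 2*(ρε x * ‖uε x‖^2) + (2*Cu^2)*ρε x) :=
      (hi2.const_mul 2).add (hρεi.const_mul _)
    refine hg.mono' hmeas.aestronglyMeasurable (ae_of_all _ fun x => ?_)
    have h1 : ‖uε x - u x‖ ≤ ‖uε x‖ + Cu := (norm_sub_le _ _).trans (by linarith [hCu x])
    rw [Real.norm_eq_abs, abs_of_nonneg (mul_nonneg (hρε0 x) (sq_nonneg _))]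
    have h2 : ‖uε x - u x‖^2 ≤ 2*‖uε x‖^2 + 2*Cu^2 := by
      nlinarith [sq_nonneg (‖uε x‖ - Cu), norm_nonneg (uε x - u x), norm_nonneg (uε x)]
    nlinarith [mul_le_mul_of_nonneg_left h2 (hρε0 x)]
  have hw1 : Integrable (fun x => ρε x * ‖uε x - u x‖) := by
    have hmeas : Measurable fun x => ρε x * ‖uε x - u x‖ := hρε.mul hwm.norm
    refine (hρεi.add hw2).mono' hmeas.aestronglyMeasurable (ae_of_all _ fun x => ?_)
    rw [Real.norm_eq_abs, abs_of_nonneg (mul_nonneg (hρε0 x) (norm_nonneg _))]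
    simp only [Pi.add_apply]
    have h2 : ‖uε x - u x‖ ≤ 1 + ‖uε x - u x‖^2 := by
      nlinarith [sq_nonneg (‖uε x - u x‖ - 1)]
    nlinarith [mul_le_mul_of_nonneg_left h2 (hρε0 x)]
  -- probability measures
  set μ := volume.withDensity (fun x => ENNReal.ofReal (ρε x)) with hμ
  set ν := volume.withDensity (fun x => ENNReal.ofReal (ρ x)) with hν
  have hμuniv : μ Set.univ = 1 := by
    rw [hμ, withDensity_apply _ MeasurableSet.univ, setLIntegral_univ,
      ← ofReal_integral_eq_lintegral_ofReal hρεi (ae_of_all _ hρε0), hρε1, ENNReal.ofReal_one]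
  have hνuniv : ν Set.univ = 1 := by
    rw [hν, withDensity_apply _ MeasurableSet.univ, setLIntegral_univ,
      ← ofReal_integral_eq_lintegral_ofReal hρi (ae_of_all _ hρ0), hρ1, ENNReal.ofReal_one]
  haveI hμP : IsProbabilityMeasure μ := ⟨hμuniv⟩
  haveI hνP : IsProbabilityMeasure ν := ⟨hνuniv⟩
  -- integral transfer
  have hμint : ∀ g : Td d → ℝ, (∫ x, g x ∂μ) = ∫ x, ρε x * g x := by
    intro g
    rw [hμ, show (fun x => ENNReal.ofReal (ρε x))
        = fun x => ((Real.toNNReal (ρε x) : ℝ≥0) : ℝ≥0∞) from rfl,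
      integral_withDensity_eq_integral_smul (f := fun x => (ρε x).toNNReal) hρε.real_toNNReal g]
    congr 1; funext x
    simp [NNReal.smul_def, Real.coe_toNNReal _ (hρε0 x)]
  have hνint : ∀ g : Td d → ℝ, (∫ x, g x ∂ν) = ∫ x, ρ x * g x := by
    intro g
    rw [hν, show (fun x => ENNReal.ofReal (ρ x))
        = fun x => ((Real.toNNReal (ρ x) : ℝ≥0) : ℝ≥0∞) from rfl,
      integral_withDensity_eq_integral_smul (f := fun x => (ρ x).toNNReal) hρ.real_toNNReal g]
    congr 1; funext x
    simp [NNReal.smul_def, Real.coe_toNNReal _ (hρ0 x)]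
  have hμIntOf : ∀ g : Td d → ℝ, Integrable (fun x => ρε x * g x) → Integrable g μ := by
    intro g hg
    rw [hμ, show (fun x => ENNReal.ofReal (ρε x))
        = fun x => ((Real.toNNReal (ρε x) : ℝ≥0) : ℝ≥0∞) from rfl,
      integrable_withDensity_iff_integrable_smul (f := fun x => (ρε x).toNNReal) hρε.real_toNNReal]
    convert hg using 1
    funext x
    simp [NNReal.smul_def, Real.coe_toNNReal _ (hρε0 x)]
  -- Cauchy-Schwarz in x
  have hBsq : (∫ x, ρε x * ‖uε x - u x‖)^2 ≤ E := by
    have h1 : Integrable (fun x => ‖uε x - u x‖) μ := hμIntOf _ hw1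
    have h2 : Integrable (fun x => ‖uε x - u x‖^2) μ := hμIntOf _ hw2
    have h3 := sq_integral_le_integral_sq h1 h2
    rw [hμint, hμint] at h3
    rw [hE]
    exact h3
  -- abbreviate the integrand
  set F : Td d × Td d → ℝ := fun q =>
    ψ (q.1 - q.2) * ρε q.1 * (ρε q.2 - ρ q.2) * ⟪u q.2 - u q.1, uε q.1 - u q.1⟫ with hF
  have hvol : (volume : Measure (Td d × Td d)) = (volume : Measure (Td d)).prod volume :=
    Measure.volume_eq_prod _ _
  have hiF' : Integrable F ((volume : Measure (Td d)).prod volume) := by rwa [← hvol]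
  have hFub : (∫ q, F q) = ∫ x, ∫ y, F (x, y) := by
    rw [hvol]; exact integral_prod F hiF'
  -- the coupling set
  set S : Set ℝ := {r : ℝ | ∃ π : Measure (Td d × Td d),
    π.map Prod.fst = μ ∧ π.map Prod.snd = ν ∧
    r = ∫ p, (torusDist p.1 p.2)^2 ∂π} with hS
  -- key estimate for every coupling
  have key : ∀ r ∈ S, (∫ q, F q) ≤ C * (r + E) := by
    rintro r ⟨π, hπ1, hπ2, hrr⟩
    haveI : IsProbabilityMeasure π := by
      constructor
      have h2 : (π.map Prod.fst) Set.univ = 1 := by rw [hπ1]; exact hμuniv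
      rwa [Measure.map_apply measurable_fst MeasurableSet.univ, Set.preimage_univ] at h2
    set D := ∫ p, torusDist p.1 p.2 ∂π with hD
    clear_value D
    have hDc : Continuous (fun p : Td d × Td d => torusDist p.1 p.2) := torusDist_continuous
    have hDint : Integrable (fun p : Td d × Td d => torusDist p.1 p.2) π :=
      hDc.integrable_of_hasCompactSupport (HasCompactSupport.of_compactSpace _)
    have hD2int : Integrable (fun p : Td d × Td d => (torusDist p.1 p.2)^2) π :=
      (hDc.pow 2).integrable_of_hasCompactSupport (HasCompactSupport.of_compactSpace _)
    have hD0 : 0 ≤ D := by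
      rw [hD]; exact integral_nonneg fun p => torusDist_nonneg _ _
    have hr0 : 0 ≤ r := by
      rw [hrr]; exact integral_nonneg fun p => sq_nonneg _
    have hD2 : D^2 ≤ r := by
      rw [hD, hrr]; exact sq_integral_le_integral_sq hDint hD2int
    -- pointwise inner bound
    have hinner : ∀ x : Td d, (∫ y, F (x, y)) ≤ (L * D) * (ρε x * ‖uε x - u x‖) := by
      intro x
      set g : Td d → ℝ := fun y => ψ (x - y) * ⟪u y - u x, uε x - u x⟫ with hg
      have hgc : Continuous g := (hψ.continuous.comp (continuous_const.sub continuous_id)).mul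
        ((hu.continuous.sub continuous_const).inner continuous_const)
      have hgb : ∀ y, ‖g y‖ ≤ Cψ * (2*Cu*‖uε x - u x‖) := by
        intro y
        rw [hg, Real.norm_eq_abs, abs_mul]
        have hi := abs_real_inner_le_norm (u y - u x) (uε x - u x)
        have h2 : ‖u y - u x‖ ≤ 2*Cu := (norm_sub_le _ _).trans (by linarith [hCu y, hCu x])
        have h3 := hCψ (x - y)
        calc |ψ (x - y)| * |(inner ℝ (u y - u x) (uε x - u x) : ℝ)|
            ≤ Cψ * (‖u y - u x‖ * ‖uε x - u x‖) :=
              mul_le_mul h3 hi (abs_nonneg _) hCψ0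
          _ ≤ Cψ * (2*Cu*‖uε x - u x‖) :=
              mul_le_mul_of_nonneg_left
                (mul_le_mul_of_nonneg_right h2 (norm_nonneg _)) hCψ0
      have hgρε : Integrable (fun y => g y * ρε y) :=
        hρεi.bdd_mul hgc.aestronglyMeasurable (ae_of_all _ hgb)
      have hgρ : Integrable (fun y => g y * ρ y) :=
        hρi.bdd_mul hgc.aestronglyMeasurable (ae_of_all _ hgb)
      have hsplit : (∫ y, F (x, y)) = ρε x * ((∫ y, g y * ρε y) - ∫ y, g y * ρ y) := by
        rw [← integral_sub hgρε hgρ, ← integral_const_mul]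
        congr 1; funext y
        simp only [hF, hg]
        ring
      have hπg1 : Integrable (fun p : Td d × Td d => g p.1) π :=
        (hgc.comp continuous_fst).integrable_of_hasCompactSupport
          (HasCompactSupport.of_compactSpace _)
      have hπg2 : Integrable (fun p : Td d × Td d => g p.2) π :=
        (hgc.comp continuous_snd).integrable_of_hasCompactSupport
          (HasCompactSupport.of_compactSpace _)
      have hμg : (∫ y, g y * ρε y) = ∫ p, g p.1 ∂π := by
        calc ∫ y, g y * ρε y = ∫ y, ρε y * g y := by simp [mul_comm]
          _ = ∫ y, g y ∂μ := (hμint g).symm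
          _ = ∫ p, g p.1 ∂π := by
              rw [← hπ1]
              exact integral_map measurable_fst.aemeasurable hgc.aestronglyMeasurable
      have hνg : (∫ y, g y * ρ y) = ∫ p, g p.2 ∂π := by
        calc ∫ y, g y * ρ y = ∫ y, ρ y * g y := by simp [mul_comm]
          _ = ∫ y, g y ∂ν := (hνint g).symm
          _ = ∫ p, g p.2 ∂π := by
              rw [← hπ2]
              exact integral_map measurable_snd.aemeasurable hgc.aestronglyMeasurable
      have hmono : (∫ p, (g p.1 - g p.2) ∂π)
          ≤ ∫ p, L * ‖uε x - u x‖ * torusDist p.1 p.2 ∂π := by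
        refine integral_mono (hπg1.sub hπg2) (hDint.const_mul _) fun p => ?_
        simp only [hg, hL]
        exact key_lip ψ u Lψ Lu hψ hu Cψ Cu hCψ0 hCu0 hCψ hCu x p.1 p.2 _
      calc (∫ y, F (x, y)) = ρε x * ((∫ y, g y * ρε y) - ∫ y, g y * ρ y) := hsplit
        _ = ρε x * ∫ p, (g p.1 - g p.2) ∂π := by
            rw [hμg, hνg, ← integral_sub hπg1 hπg2]
        _ ≤ ρε x * ∫ p, L * ‖uε x - u x‖ * torusDist p.1 p.2 ∂π :=
            mul_le_mul_of_nonneg_left hmono (hρε0 x)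
        _ = ρε x * (L * ‖uε x - u x‖ * D) := by rw [hD, integral_const_mul]
        _ = (L * D) * (ρε x * ‖uε x - u x‖) := by ring
    have hIle : (∫ q, F q) ≤ (L*D) * ∫ x, ρε x * ‖uε x - u x‖ := by
      rw [hFub]
      calc (∫ x, ∫ y, F (x, y)) ≤ ∫ x, (L*D) * (ρε x * ‖uε x - u x‖) :=
            integral_mono hiF'.integral_prod_left (hw1.const_mul _) hinner
        _ = (L*D) * ∫ x, ρε x * ‖uε x - u x‖ := integral_const_mul _ _
    set B := ∫ x, ρε x * ‖uε x - u x‖ with hB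
    clear_value B
    have hB0 : 0 ≤ B := by
      rw [hB]; exact integral_nonneg fun x => mul_nonneg (hρε0 x) (norm_nonneg _)
    have h1 : D*B ≤ (D^2 + B^2)/2 := by nlinarith [sq_nonneg (D - B)]
    have h2 : L*(D*B) ≤ L*((D^2+B^2)/2) := mul_le_mul_of_nonneg_left h1 hL0
    have h3 : D^2 + B^2 ≤ r + E := add_le_add hD2 hBsq
    have h4 : L*((D^2+B^2)/2) ≤ (L/2) * (r + E) := by
      have h := mul_le_mul_of_nonneg_left h3 (by linarith : (0:ℝ) ≤ L/2)
      linarith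
    have h5 : (L/2) * (r+E) ≤ C * (r+E) := by
      have hre : 0 ≤ r + E := by linarith
      exact mul_le_mul_of_nonneg_right (by rw [hCdef]; linarith) hre
    calc (∫ q, F q) ≤ (L*D)*B := hIle
      _ = L*(D*B) := by ring
      _ ≤ C * (r + E) := by linarith
  -- nonemptiness of the coupling set
  have hSne : S.Nonempty := by
    refine ⟨∫ p, (torusDist p.1 p.2)^2 ∂(μ.prod ν), μ.prod ν, ?_, ?_, rfl⟩
    · rw [Measure.map_fst_prod, hνuniv, one_smul]
    · rw [Measure.map_snd_prod, hμuniv, one_smul]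
  -- conclude via sInf
  have hlow : ((∫ q, F q) - C*E)/C ≤ sInf S := by
    refine le_csInf hSne fun r hr => ?_
    have h := key r hr
    rw [div_le_iff₀ hCpos]
    have hexp : C * (r + E) = r * C + C * E := by ring
    linarith [hexp ▸ h]
  rw [div_le_iff₀ hCpos] at hlow
  have hW : W2sq μ ν = sInf S := rfl
  rw [hW]
  have hexp : C * (sInf S + E) = sInf S * C + C * E := by ring
  linarith
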